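/- Let p ≥ 2 be even, N ≥ 1, β ∈ ℝ, k₁, k₂ ∈ ℕ, index families i : Fin k₁ → (Fin N)^p and j : Fin k₂ → (Fin N)^{p−1}, and s ≥ 1 replicas. For each a = 1,…,s fix n_a ∈ ℕ and sites r^a_1,…,r^a_{n_a} ∈ Fin N, and set Q(σ^1,…,σ^s) = Π_{a=1}^s Π_{l=1}^{n_a} σ^a(r^a_l). Let Ω_{N+1} be the s-fold product Gibbs average on ({−1,1}^{N+1})^s for the decomposed Hamiltonian −Σ_ν σ(i_ν(1))⋯σ(i_ν(p)) − σ(N+1) Σ_ν σ(j_ν(1))⋯σ(j_ν(p−1)), and Ω̃_N the s-fold product Gibbs average on ({−1,1}^N)^s for the perturbed Hamiltonian −Σ_ν σ(i_ν(1))⋯σ(i_ν(p)) − Σ_ν σ(j_ν(1))⋯σ(j_ν(p−1)). Then Ω_{N+1}( Q · Π_{a=1}^s (σ^a(N+1))^{n_a} ) = Ω̃_N( Q ). (This is the exact finite-size, multi-replica gauge identity from which the paper's Theorem 3 — ⟨Q_{ab}⟩_t → ⟨q_{ab}Q_{ab}⟩, i.e. non-filled monomials get filled — follows.) -/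

import Mathlib

noncomputable def spin (b : Bool) : ℝ := if b then 1 else -1

lemma spin_beq (a b : Bool) : spin (a == b) = spin a * spin b := by
  cases a <;> cases b <;> simp [spin]

lemma beq_beq_cancel (a b : Bool) : ((a == b) == b) = a := by
  cases a <;> cases b <;> rfl

lemma spin_pow_even (b : Bool) {m : ℕ} (h : Even m) : spin b ^ m = 1 := by
  obtain ⟨k, rfl⟩ := h
  rw [← two_mul, pow_mul]
  cases b <;> simp [spin]

def gaugeEquiv (N : ℕ) : ((Fin N → Bool) × Bool) ≃ (Fin (N + 1) → Bool) where
  toFun x := Fin.snoc (fun m => x.1 m == x.2) x.2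
  invFun σ := (fun m => σ m.castSucc == σ (Fin.last N), σ (Fin.last N))
  left_inv x := by
    obtain ⟨τ, ε⟩ := x
    simp [Fin.snoc_castSucc, Fin.snoc_last, beq_beq_cancel]
  right_inv σ := by
    funext x
    refine Fin.lastCases ?_ ?_ x
    · simp
    · intro m; simp [beq_beq_cancel]

theorem multireplica_gauge_identity (p N : ℕ) (hpeven : Even p) (hp : 2 ≤ p)
    (hN : 1 ≤ N) (β : ℝ) (k₁ k₂ : ℕ) (i : Fin k₁ → Fin p → Fin N)
    (j : Fin k₂ → Fin (p - 1) → Fin N) (s : ℕ) (hs : 1 ≤ s)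
    (n : Fin s → ℕ) (r : (a : Fin s) → Fin (n a) → Fin N) :
    (∑ σs : Fin s → (Fin (N + 1) → Bool),
        ((∏ a : Fin s, ∏ l : Fin (n a), spin (σs a ((r a l).castSucc))) *
            ∏ a : Fin s, spin (σs a (Fin.last N)) ^ (n a)) *
          ∏ a : Fin s,
            Real.exp (β * ∑ ν : Fin k₁, ∏ l : Fin p, spin (σs a ((i ν l).castSucc))
              + β * spin (σs a (Fin.last N)) *
                  ∑ ν : Fin k₂, ∏ l : Fin (p - 1), spin (σs a ((j ν l).castSucc))))
      / (∑ σ : Fin (N + 1) → Bool,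
          Real.exp (β * ∑ ν : Fin k₁, ∏ l : Fin p, spin (σ ((i ν l).castSucc))
            + β * spin (σ (Fin.last N)) *
                ∑ ν : Fin k₂, ∏ l : Fin (p - 1), spin (σ ((j ν l).castSucc)))) ^ s
    = (∑ σs : Fin s → (Fin N → Bool),
          (∏ a : Fin s, ∏ l : Fin (n a), spin (σs a (r a l))) *
            ∏ a : Fin s,
              Real.exp (β * ∑ ν : Fin k₁, ∏ l : Fin p, spin (σs a (i ν l))
                + β * ∑ ν : Fin k₂, ∏ l : Fin (p - 1), spin (σs a (j ν l))))
        / (∑ σ : Fin N → Bool,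
            Real.exp (β * ∑ ν : Fin k₁, ∏ l : Fin p, spin (σ (i ν l))
              + β * ∑ ν : Fin k₂, ∏ l : Fin (p - 1), spin (σ (j ν l)))) ^ s := by
  -- per-configuration energy identity
  have hcast : ∀ (τ : Fin N → Bool) (ε : Bool) (m : Fin N),
      spin ((gaugeEquiv N (τ, ε)) m.castSucc) = spin (τ m) * spin ε := by
    intro τ ε m
    simp [gaugeEquiv, spin_beq]
  have hlast : ∀ (τ : Fin N → Bool) (ε : Bool),
      (gaugeEquiv N (τ, ε)) (Fin.last N) = ε := by
    intro τ ε
    simp [gaugeEquiv]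
  have hE : ∀ (τ : Fin N → Bool) (ε : Bool),
      β * ∑ ν : Fin k₁, ∏ l : Fin p, spin ((gaugeEquiv N (τ, ε)) ((i ν l).castSucc))
        + β * spin ((gaugeEquiv N (τ, ε)) (Fin.last N)) *
            ∑ ν : Fin k₂, ∏ l : Fin (p - 1), spin ((gaugeEquiv N (τ, ε)) ((j ν l).castSucc))
      = β * ∑ ν : Fin k₁, ∏ l : Fin p, spin (τ (i ν l))
        + β * ∑ ν : Fin k₂, ∏ l : Fin (p - 1), spin (τ (j ν l)) := by
    intro τ ε
    have h3 : spin ε ^ (p - 1) * spin ε = 1 := by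
      rw [← pow_succ, Nat.sub_add_cancel (by omega)]
      exact spin_pow_even ε hpeven
    simp only [hcast, hlast, Finset.prod_mul_distrib, Finset.prod_const, Finset.card_univ,
      Fintype.card_fin]
    rw [spin_pow_even ε hpeven]
    simp only [mul_one]
    congr 1
    rw [← Finset.sum_mul]
    calc β * spin ε * ((∑ ν : Fin k₂, ∏ l : Fin (p - 1), spin (τ (j ν l))) * spin ε ^ (p - 1))
        = β * (∑ ν : Fin k₂, ∏ l : Fin (p - 1), spin (τ (j ν l))) * (spin ε ^ (p - 1) * spin ε) := by
          ring
      _ = β * ∑ ν : Fin k₂, ∏ l : Fin (p - 1), spin (τ (j ν l)) := by rw [h3, mul_one]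
  have hQ : ∀ (a : Fin s) (τ : Fin N → Bool) (ε : Bool),
      (∏ l : Fin (n a), spin ((gaugeEquiv N (τ, ε)) ((r a l).castSucc))) *
        spin ((gaugeEquiv N (τ, ε)) (Fin.last N)) ^ (n a)
      = ∏ l : Fin (n a), spin (τ (r a l)) := by
    intro a τ ε
    simp only [hcast, hlast, Finset.prod_mul_distrib, Finset.prod_const, Finset.card_univ,
      Fintype.card_fin]
    rw [mul_assoc, ← pow_add, spin_pow_even ε ⟨n a, rfl⟩, mul_one]
  -- denominator
  have hden : (∑ σ : Fin (N + 1) → Bool,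
        Real.exp (β * ∑ ν : Fin k₁, ∏ l : Fin p, spin (σ ((i ν l).castSucc))
          + β * spin (σ (Fin.last N)) *
              ∑ ν : Fin k₂, ∏ l : Fin (p - 1), spin (σ ((j ν l).castSucc))))
      = 2 * ∑ σ : Fin N → Bool,
          Real.exp (β * ∑ ν : Fin k₁, ∏ l : Fin p, spin (σ (i ν l))
            + β * ∑ ν : Fin k₂, ∏ l : Fin (p - 1), spin (σ (j ν l))) := by
    rw [← Equiv.sum_comp (gaugeEquiv N)]
    rw [Fintype.sum_prod_type]
    simp only [hE]
    rw [Finset.sum_comm]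
    simp [two_mul]
  -- numerator
  have hnum : (∑ σs : Fin s → (Fin (N + 1) → Bool),
        ((∏ a : Fin s, ∏ l : Fin (n a), spin (σs a ((r a l).castSucc))) *
            ∏ a : Fin s, spin (σs a (Fin.last N)) ^ (n a)) *
          ∏ a : Fin s,
            Real.exp (β * ∑ ν : Fin k₁, ∏ l : Fin p, spin (σs a ((i ν l).castSucc))
              + β * spin (σs a (Fin.last N)) *
                  ∑ ν : Fin k₂, ∏ l : Fin (p - 1), spin (σs a ((j ν l).castSucc))))
      = 2 ^ s * ∑ σs : Fin s → (Fin N → Bool),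
          (∏ a : Fin s, ∏ l : Fin (n a), spin (σs a (r a l))) *
            ∏ a : Fin s,
              Real.exp (β * ∑ ν : Fin k₁, ∏ l : Fin p, spin (σs a (i ν l))
                + β * ∑ ν : Fin k₂, ∏ l : Fin (p - 1), spin (σs a (j ν l))) := by
    rw [← Equiv.sum_comp (Equiv.piCongrRight (fun _ : Fin s => gaugeEquiv N))]
    have key : ∀ g : Fin s → ((Fin N → Bool) × Bool),
        ((∏ a : Fin s, ∏ l : Fin (n a),
              spin (((Equiv.piCongrRight (fun _ : Fin s => gaugeEquiv N)) g a) ((r a l).castSucc))) *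
            ∏ a : Fin s,
              spin (((Equiv.piCongrRight (fun _ : Fin s => gaugeEquiv N)) g a) (Fin.last N)) ^ (n a)) *
          ∏ a : Fin s,
            Real.exp (β * ∑ ν : Fin k₁, ∏ l : Fin p,
                spin (((Equiv.piCongrRight (fun _ : Fin s => gaugeEquiv N)) g a) ((i ν l).castSucc))
              + β * spin (((Equiv.piCongrRight (fun _ : Fin s => gaugeEquiv N)) g a) (Fin.last N)) *
                  ∑ ν : Fin k₂, ∏ l : Fin (p - 1),
                    spin (((Equiv.piCongrRight (fun _ : Fin s => gaugeEquiv N)) g a) ((j ν l).castSucc)))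
        = (∏ a : Fin s, ∏ l : Fin (n a), spin ((g a).1 (r a l))) *
            ∏ a : Fin s,
              Real.exp (β * ∑ ν : Fin k₁, ∏ l : Fin p, spin ((g a).1 (i ν l))
                + β * ∑ ν : Fin k₂, ∏ l : Fin (p - 1), spin ((g a).1 (j ν l))) := by
      intro g
      have hg : ∀ a : Fin s,
          (Equiv.piCongrRight (fun _ : Fin s => gaugeEquiv N)) g a
            = gaugeEquiv N ((g a).1, (g a).2) := by
        intro a; rfl
      simp only [hg]
      rw [← Finset.prod_mul_distrib]
      congr 1
      · exact Finset.prod_congr rfl fun a _ => hQ a (g a).1 (g a).2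
      · exact Finset.prod_congr rfl fun a _ => by rw [hE (g a).1 (g a).2]
    simp only [key]
    rw [← Equiv.sum_comp (Equiv.arrowProdEquivProdArrow (Fin s) (fun _ => Fin N → Bool) (fun _ => Bool)).symm]
    rw [Fintype.sum_prod_type]
    have : ∀ x : (Fin s → (Fin N → Bool)) × (Fin s → Bool), ∀ a : Fin s,
        ((Equiv.arrowProdEquivProdArrow (Fin s) (fun _ => Fin N → Bool) (fun _ => Bool)).symm x a).1 = x.1 a := by
      intro x a; rfl
    simp only [this]
    rw [Finset.sum_comm, Finset.sum_const, Finset.card_univ, Fintype.card_fun,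
      Fintype.card_bool, Fintype.card_fin, nsmul_eq_mul]
    push_cast
    ring
  rw [hnum, hden, mul_pow]
  exact mul_div_mul_left _ _ (by positivity)
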